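/- Under the blanket assumptions, assume the level set X := {x: F(x) ≤ F(x⁰)} is nonempty and compact, and let ḡ := sup_{z∈X} g(z). Fix α̲ > 0 and define X_{α̲} := {z ∈ ℝ^n: dist²(z, X) ≤ ḡ/α̲} and 𝒴 := ∪_{z ∈ X_{α̲}} ∂g(z). Then 𝒴 is compact, and for every x ∈ X with (x,y) ∈ dom(Q) and every α ≥ α̲, the point y⁺ := prox_{αg*}(y + αx) belongs to 𝒴. -/

import Mathlib

open Filter Topology Set
open scoped RealInnerProductSpace Pointwise NNReal

noncomputable section

namespace Paper

variable {E : Type*} [NormedAddCommGroup E] [InnerProductSpace ℝ E]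

/-- The effective domain of an extended-real-valued function. -/
def edom (φ : E → EReal) : Set E := {x | φ x ≠ ⊤}

/-- A function with values in `(-∞, +∞]` is proper if it is not identically `+∞`
and never takes the value `-∞`. -/
def Proper (φ : E → EReal) : Prop := (∃ x, φ x ≠ ⊤) ∧ ∀ x, φ x ≠ ⊥

/-- The Fréchet subdifferential of `φ` at `x`. -/
def frSubdiff (φ : E → EReal) (x : E) : Set E :=
  {y | φ x ≠ ⊤ ∧ 0 ≤ Filter.liminf
      (fun z : E => (φ z - φ x - ((⟪y, z - x⟫ : ℝ) : EReal)) * ((‖z - x‖⁻¹ : ℝ) : EReal))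
      (𝓝[≠] x)}

/-- The limiting (Mordukhovich) subdifferential of `φ` at `x`. -/
def limSubdiff (φ : E → EReal) (x : E) : Set E :=
  {y | ∃ u v : ℕ → E,
      Tendsto u atTop (𝓝 x) ∧ Tendsto (fun k => φ (u k)) atTop (𝓝 (φ x)) ∧
      (∀ k, v k ∈ frSubdiff φ (u k)) ∧ Tendsto v atTop (𝓝 y)}

/-- The convex subdifferential of a real-valued function. -/
def cvxSubdiff (g : E → ℝ) (x : E) : Set E :=
  {y | ∀ z, g x + ⟪y, z - x⟫ ≤ g z}

/-- The convex subdifferential of an extended-real-valued function. -/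
def cvxSubdiffE (φ : E → EReal) (x : E) : Set E :=
  {y | ∀ z, φ x + ((⟪y, z - x⟫ : ℝ) : EReal) ≤ φ z}

/-- The Fenchel conjugate of an extended-real-valued function. -/
def fconjE (φ : E → EReal) : E → EReal :=
  fun y => ⨆ x : E, (((⟪x, y⟫ : ℝ) : EReal) - φ x)

/-- The Fenchel conjugate of a real-valued function. -/
def fconj (g : E → ℝ) : E → EReal := fconjE (fun x => ((g x : ℝ) : EReal))

/-- `φ` satisfies the calmness condition at `x` relative to `A`. -/
def CalmAt (φ : E → EReal) (x : E) (A : Set E) : Prop :=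
  ∃ κ : ℝ, 0 < κ ∧ ∃ B ∈ 𝓝 x, ∀ u ∈ B ∩ A,
    φ u ≤ φ x + ((κ * ‖u - x‖ : ℝ) : EReal) ∧ φ x ≤ φ u + ((κ * ‖u - x‖ : ℝ) : EReal)

/-- `φ` satisfies the calmness condition on `A`. -/
def CalmOn (φ : E → EReal) (A : Set E) : Prop := ∀ x ∈ A, CalmAt φ x A

/-- The Kurdyka–Łojasiewicz property of `φ` at `x`. -/
def KLAt (φ : E → EReal) (x : E) : Prop :=
  ∃ ε > (0 : ℝ), ∃ δ > (0 : ℝ), ∃ ϕ ϕ' : ℝ → ℝ,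
    ϕ 0 = 0 ∧ ContinuousOn ϕ (Set.Ico 0 ε) ∧ ConcaveOn ℝ (Set.Ico 0 ε) ϕ ∧
    (∀ s ∈ Set.Ioo (0 : ℝ) ε, HasDerivAt ϕ (ϕ' s) s) ∧
    ContinuousOn ϕ' (Set.Ioo 0 ε) ∧ (∀ s ∈ Set.Ioo (0 : ℝ) ε, 0 < ϕ' s) ∧
    ∀ z ∈ Metric.ball x δ, φ x < φ z → φ z < φ x + (ε : EReal) →
      1 ≤ ENNReal.ofReal (ϕ' ((φ z).toReal - (φ x).toReal)) *
        EMetric.infEdist (0 : E) (limSubdiff φ z)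

/-- The KL property of `φ` at `x` with exponent `θ`. -/
def KLExpAt (φ : E → EReal) (x : E) (θ : ℝ) : Prop :=
  ∃ c > (0 : ℝ), ∃ ε > (0 : ℝ), ∃ δ > (0 : ℝ),
    ∀ z ∈ Metric.ball x δ, φ x < φ z → φ z < φ x + (ε : EReal) →
      ENNReal.ofReal (c * ((φ z).toReal - (φ x).toReal) ^ θ) ≤
        EMetric.infEdist (0 : E) (limSubdiff φ z)

/-- The (possibly multivalued) proximity operator of `φ`. -/
def proxSet (φ : E → EReal) (u : E) : Set E :=
  {z | ∀ w, φ z + ((‖z - u‖ ^ 2 / 2 : ℝ) : EReal) ≤ φ w + ((‖w - u‖ ^ 2 / 2 : ℝ) : EReal)}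

/-- A positive scaling of an extended-real-valued function. -/
def scaleE (α : ℝ) (φ : E → EReal) : E → EReal := fun x => ((α : ℝ) : EReal) * φ x

/-- `h` is locally Lipschitz differentiable on `s`. -/
def LocLipGradOn [CompleteSpace E] (h : E → ℝ) (s : Set E) : Prop :=
  (∀ x ∈ s, DifferentiableAt ℝ h x) ∧
  ∀ x ∈ s, ∃ U ∈ 𝓝 x, ∃ L : ℝ, ∀ u ∈ U ∩ s, ∀ v ∈ U ∩ s,
    ‖gradient h u - gradient h v‖ ≤ L * ‖u - v‖

/-- The numerator `ζ = f + h`. -/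
def zeta (f : E → EReal) (h : E → ℝ) (x : E) : EReal := f x + ((h x : ℝ) : EReal)

/-- `η(x,y) = ⟨x,y⟩ − g^*(y)`. -/
def eta (g : E → ℝ) (x y : E) : EReal := ((⟪x, y⟫ : ℝ) : EReal) - fconj g y

/-- The extended objective of the fractional problem. -/
def Ffun (f : E → EReal) (g h : E → ℝ) (x : E) : EReal :=
  if g x ≠ 0 ∧ f x ≠ ⊤ then ((((f x).toReal + h x) / g x : ℝ) : EReal) else ⊤

/-- The extended objective of the reformulated problem. -/
def Qfun (f : E → EReal) (g h : E → ℝ) (x y : E) : EReal :=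
  if f x ≠ ⊤ ∧ 0 < eta g x y then
    ((((f x).toReal + h x) / (eta g x y).toReal : ℝ) : EReal) else ⊤

/-- Pack a pair into the `ℓ²` product space. -/
def mk2 (x y : E) : WithLp 2 (E × E) := (WithLp.equiv 2 (E × E)).symm (x, y)

def pr1 (p : WithLp 2 (E × E)) : E := (WithLp.equiv 2 (E × E) p).1

def pr2 (p : WithLp 2 (E × E)) : E := (WithLp.equiv 2 (E × E) p).2

/-- `Q` as a function on the `ℓ²` product space. -/
def Qpair (f : E → EReal) (g h : E → ℝ) (p : WithLp 2 (E × E)) : EReal :=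
  Qfun f g h (pr1 p) (pr2 p)

/-- The blanket assumptions of the paper. -/
structure Blanket [CompleteSpace E] (f : E → EReal) (g h : E → ℝ) : Prop where
  f_proper : Proper f
  f_lsc : LowerSemicontinuous f
  f_cont : ContinuousOn f (edom f)
  f_bddBelow : ∃ m : ℝ, ∀ x, (m : EReal) ≤ f x
  h_lsc : LowerSemicontinuous h
  h_diff : LocLipGradOn h {x | g x ≠ 0}
  g_convex : ConvexOn ℝ Set.univ g
  g_nonneg : ∀ x, 0 ≤ g x
  omega_nonempty : ∃ x, g x ≠ 0
  zeta_nonneg : ∀ x, f x ≠ ⊤ → 0 ≤ zeta f h x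

/-- `x` is a critical point of `F`: `0 ∈ ∂̂f(x) + ∇h(x) − F(x)·∂g(x)`. -/
def IsCritF [CompleteSpace E] (f : E → EReal) (g h : E → ℝ) (x : E) : Prop :=
  g x ≠ 0 ∧ f x ≠ ⊤ ∧
  ∃ u ∈ frSubdiff f x, ∃ v ∈ cvxSubdiff g x,
    u + gradient h x - (Ffun f g h x).toReal • v = 0

/-- The level set `X = {x : F(x) ≤ F(x⁰)}`. -/
def lvlSet (f : E → EReal) (g h : E → ℝ) (x0 : E) : Set E :=
  {x | Ffun f g h x ≤ Ffun f g h x0}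

/-- The enlargement `X_{α̲}` of the level set. -/
def Xal (f : E → EReal) (g h : E → ℝ) (x0 : E) (αl : ℝ) : Set E :=
  {z | (Metric.infDist z (lvlSet f g h x0)) ^ 2 ≤ sSup (g '' lvlSet f g h x0) / αl}

/-- The compact set `𝒴 = ∪_{z ∈ X_{α̲}} ∂g(z)`. -/
def Yset (f : E → EReal) (g h : E → ℝ) (x0 : E) (αl : ℝ) : Set E :=
  ⋃ z ∈ Xal f g h x0 αl, cvxSubdiff g z

/-- The set `S = {(x,y) ∈ X × 𝒴 : η(x,y) > 0}`. -/
def Sset (f : E → EReal) (g h : E → ℝ) (x0 : E) (αl : ℝ) : Set (E × E) :=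
  {p | p.1 ∈ lvlSet f g h x0 ∧ p.2 ∈ Yset f g h x0 αl ∧ 0 < eta g p.1 p.2}

/-- The set of accumulation points of a sequence. -/
def accSet {X : Type*} [TopologicalSpace X] (pt : ℕ → X) : Set X :=
  {p | ∃ σ : ℕ → ℕ, StrictMono σ ∧ Tendsto (pt ∘ σ) atTop (𝓝 p)}

/-- A polyhedral function: its epigraph is a finite intersection of closed half-spaces. -/
def IsPolyhedralFn (φ : E → EReal) : Prop :=
  ∃ (m : ℕ) (w : Fin m → E) (c b : Fin m → ℝ),
    ∀ (x : E) (a : ℝ), (φ x ≤ (a : EReal) ↔ ∀ i, ⟪w i, x⟫ + c i * a ≤ b i)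



section Aux

variable [FiniteDimensional ℝ E]

lemma exists_subgrad (g : E → ℝ) (hg : ConvexOn ℝ Set.univ g) (z : E) :
    ∃ w : E, w ∈ cvxSubdiff g z := by
  have hgc : Continuous g := by
    have := hg.continuousOn isOpen_univ
    exact continuousOn_univ.mp this
  set S : Set (E × ℝ) := {p | g p.1 < p.2} with hS
  have hSo : IsOpen S := isOpen_lt (hgc.comp continuous_fst) continuous_snd
  have hSc : Convex ℝ S := by
    rintro ⟨v1, t1⟩ h1 ⟨v2, t2⟩ h2 a b ha hb hab
    simp only [hS, Set.mem_setOf_eq] at h1 h2 ⊢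
    have := hg.2 (Set.mem_univ v1) (Set.mem_univ v2) ha hb hab
    have hlt : a * g v1 + b * g v2 < a * t1 + b * t2 := by
      rcases eq_or_lt_of_le ha with h | h
      · have hb1 : b = 1 := by linarith
        subst hb1; simp [← h]; nlinarith
      · nlinarith
    calc g (a • v1 + b • v2) ≤ a * g v1 + b * g v2 := by simpa using this
      _ < a * t1 + b * t2 := hlt
      _ = (a • (v1, t1) + b • (v2, t2)).2 := by simp
  have hzS : (z, g z) ∉ S := by simp [hS]
  obtain ⟨L, hL⟩ := geometric_hahn_banach_point_open hSc hSo hzS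
  set s : ℝ := L (0, 1) with hs
  have hdec : ∀ v t, L (v, t) = L (v, 0) + t * s := by
    intro v t
    have : (v, t) = (v, (0:ℝ)) + t • ((0:E), (1:ℝ)) := by simp
    rw [this, map_add, map_smul]
    simp only [smul_eq_mul, hs]
  have hspos : 0 < s := by
    have := hL (z, g z + 1) (by simp [hS])
    rw [hdec z (g z), hdec z (g z + 1)] at this
    nlinarith
  obtain ⟨w', hw'⟩ : ∃ w' : E, ∀ v, L (v, 0) = ⟪w', v⟫ := by
    refine ⟨(InnerProductSpace.toDual ℝ E).symm (L.comp (ContinuousLinearMap.inl ℝ E ℝ)), fun v => ?_⟩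
    simp [InnerProductSpace.toDual_symm_apply]
  refine ⟨(-s⁻¹) • w', fun v => ?_⟩
  have key : L (z, g z) ≤ L (v, g v) := by
    have h2 : ∀ ε : ℝ, 0 < ε → L (z, g z) ≤ L (v, g v + ε) := fun ε hε =>
      (hL (v, g v + ε) (by simp [hS, hε])).le
    have hcont : Tendsto (fun ε : ℝ => L (v, g v + ε)) (𝓝[>] 0) (𝓝 (L (v, g v))) := by
      have : Tendsto (fun ε : ℝ => (v, g v + ε)) (𝓝[>] 0) (𝓝 (v, g v)) := by
        apply Tendsto.mono_left _ nhdsWithin_le_nhds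
        have h1 : Tendsto (fun ε : ℝ => g v + ε) (𝓝 0) (𝓝 (g v)) := by
          have hc : Continuous (fun ε : ℝ => g v + ε) := continuous_const.add continuous_id
          simpa using hc.tendsto (0:ℝ)
        have h2 : Tendsto (fun _ : ℝ => v) (𝓝 (0:ℝ)) (𝓝 v) := tendsto_const_nhds
        have := h2.prodMk h1
        simpa [nhds_prod_eq] using this
      exact (L.continuous.tendsto _).comp this
    exact ge_of_tendsto hcont (eventually_nhdsWithin_of_forall fun ε hε => h2 ε hε)
  rw [hdec z (g z), hdec v (g v), hw' z, hw' v] at key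
  have this2 : ⟪w', z⟫ + g z * s ≤ ⟪w', v⟫ + g v * s := key
  have hinner : ⟪(-s⁻¹) • w', v - z⟫ = -s⁻¹ * (⟪w', v⟫ - ⟪w', z⟫) := by
    rw [real_inner_smul_left, inner_sub_right]
  rw [hinner]
  have hsinv : 0 < s⁻¹ := inv_pos.2 hspos
  have this3 := mul_le_mul_of_nonneg_left this2 hsinv.le
  have hss : s * s⁻¹ = 1 := mul_inv_cancel₀ (ne_of_gt hspos)
  have e1 : s⁻¹ * (⟪w', z⟫ + g z * s) = s⁻¹ * ⟪w', z⟫ + g z * (s * s⁻¹) := by ring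
  have e2 : s⁻¹ * (⟪w', v⟫ + g v * s) = s⁻¹ * ⟪w', v⟫ + g v * (s * s⁻¹) := by ring
  rw [e1, e2, hss, mul_one, mul_one] at this3
  have e3 : g z + -s⁻¹ * (⟪w', v⟫ - ⟪w', z⟫) = g z + s⁻¹ * ⟪w', z⟫ - s⁻¹ * ⟪w', v⟫ := by ring
  rw [e3]
  linarith

end Aux

lemma fconj_ge (g : E → ℝ) (w x : E) : ((⟪x, w⟫ - g x : ℝ) : EReal) ≤ fconj g w := by
  have := le_iSup (fun x : E => (((⟪x, w⟫ : ℝ) : EReal) - ((g x : ℝ) : EReal))) x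
  rw [EReal.coe_sub]; exact this

lemma fconj_le_real (g : E → ℝ) (w : E) (r : ℝ) (h : ∀ x, ⟪x, w⟫ - g x ≤ r) :
    fconj g w ≤ (r : EReal) := by
  apply iSup_le; intro x
  rw [show (((⟪x, w⟫ : ℝ) : EReal) - ((g x : ℝ) : EReal)) = ((⟪x, w⟫ - g x : ℝ) : EReal) from (EReal.coe_sub _ _).symm]
  exact_mod_cast h x

lemma fconj_ne_bot (g : E → ℝ) (w : E) : fconj g w ≠ ⊥ :=
  fun h => absurd (h ▸ fconj_ge g w 0) (by simp)

lemma fconj_real_of_le (g : E → ℝ) (w : E) (r : ℝ) (h : fconj g w ≤ (r : EReal)) :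
    ∃ s : ℝ, fconj g w = (s : EReal) ∧ s ≤ r := by
  have hnt : fconj g w ≠ ⊤ := fun ht => by rw [ht] at h; exact absurd h (by simp)
  refine ⟨(fconj g w).toReal, (EReal.coe_toReal hnt (fconj_ne_bot g w)).symm, ?_⟩
  rw [(EReal.coe_toReal hnt (fconj_ne_bot g w)).symm] at h
  exact_mod_cast h

lemma prox_key (g : E → ℝ) (α : ℝ) (hα : 0 < α) (u yp : E)
    (hprox : yp ∈ proxSet (scaleE α (fconj g)) u)
    (Gyp : ℝ) (hGyp : fconj g yp = (Gyp : EReal)) (w : E) (r : ℝ)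
    (hw : fconj g w ≤ (r : EReal)) :
    α * (Gyp - r) ≤ ⟪yp - u, w - yp⟫ := by
  set C : ℝ := ‖w - yp‖ ^ 2 / 2 with hC
  have hCnn : 0 ≤ C := by positivity
  have hstep : ∀ t : ℝ, 0 < t → t ≤ 1 → α * (Gyp - r) ≤ ⟪yp - u, w - yp⟫ + t * C := by
    intro t ht ht1
    set wt := yp + t • (w - yp) with hwt
    have hfwt : fconj g wt ≤ (((1 - t) * Gyp + t * r : ℝ) : EReal) := by
      apply fconj_le_real
      intro x
      have h1 : ⟪x, yp⟫ - g x ≤ Gyp := by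
        have := fconj_ge g yp x; rw [hGyp] at this; exact_mod_cast this
      have h2 : ⟪x, w⟫ - g x ≤ r := by
        have := (fconj_ge g w x).trans hw; exact_mod_cast this
      have hinn : ⟪x, wt⟫ = (1 - t) * ⟪x, yp⟫ + t * ⟪x, w⟫ := by
        rw [hwt, inner_add_right, real_inner_smul_right, inner_sub_right]; ring
      rw [hinn]
      nlinarith
    obtain ⟨s, hs, hsle⟩ := fconj_real_of_le g wt _ hfwt
    have hp := hprox wt
    rw [show scaleE α (fconj g) yp = ((α * Gyp : ℝ) : EReal) by
          rw [scaleE, hGyp]; exact_mod_cast (EReal.coe_mul α Gyp).symm,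
        show scaleE α (fconj g) wt = ((α * s : ℝ) : EReal) by
          rw [scaleE, hs]; exact_mod_cast (EReal.coe_mul α s).symm,
        ← EReal.coe_add, ← EReal.coe_add, EReal.coe_le_coe_iff] at hp
    have hnorm : ‖wt - u‖ ^ 2 = ‖yp - u‖ ^ 2 + 2 * (t * ⟪yp - u, w - yp⟫) + t ^ 2 * ‖w - yp‖ ^ 2 := by
      have : wt - u = (yp - u) + t • (w - yp) := by rw [hwt]; abel
      rw [this, norm_add_sq_real, real_inner_smul_right, norm_smul]
      simp [mul_pow, sq_abs]
      try ring
    have hαs : α * s ≤ α * ((1 - t) * Gyp + t * r) :=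
      mul_le_mul_of_nonneg_left hsle hα.le
    nlinarith [hp, hnorm, hαs]
  have htends : Tendsto (fun t : ℝ => ⟪yp - u, w - yp⟫ + t * C) (𝓝[>] 0) (𝓝 (⟪yp - u, w - yp⟫)) := by
    have hc : Continuous (fun t : ℝ => ⟪yp - u, w - yp⟫ + t * C) := by continuity
    have := hc.tendsto (0 : ℝ)
    simp only [zero_mul, add_zero] at this
    exact this.mono_left nhdsWithin_le_nhds
  refine ge_of_tendsto htends ?_
  filter_upwards [Ioc_mem_nhdsGT one_pos] with t htm
  exact hstep t htm.1 htm.2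


/-- `𝒴` is compact and contains every proximal step on `g^*` started in `S`. -/
theorem statement12 {n : ℕ} (f : EuclideanSpace ℝ (Fin n) → EReal)
    (g h : EuclideanSpace ℝ (Fin n) → ℝ) (hb : Blanket f g h)
    (x0 : EuclideanSpace ℝ (Fin n)) (hx0 : Ffun f g h x0 ≠ ⊤)
    (hne : (lvlSet f g h x0).Nonempty) (hcomp : IsCompact (lvlSet f g h x0))
    (αl : ℝ) (hαl : 0 < αl) :
    IsCompact (Yset f g h x0 αl) ∧
    ∀ x ∈ lvlSet f g h x0, ∀ y, Qfun f g h x y ≠ ⊤ → ∀ α : ℝ, αl ≤ α →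
      ∀ yp ∈ proxSet (scaleE α (fconj g)) (y + α • x), yp ∈ Yset f g h x0 αl := by
  classical
  set X := lvlSet f g h x0 with hX
  have hgconv := hb.g_convex
  have hgcont : Continuous g :=
    continuousOn_univ.mp (hgconv.continuousOn isOpen_univ)
  set gbar : ℝ := sSup (g '' X) with hgbar
  have hbdd : BddAbove (g '' X) := (hcomp.image hgcont).bddAbove
  obtain ⟨xw, hxw⟩ := hne
  have hgbar_nonneg : 0 ≤ gbar :=
    le_trans (hb.g_nonneg xw) (le_csSup hbdd ⟨xw, hxw, rfl⟩)
  have hcnn : 0 ≤ gbar / αl := div_nonneg hgbar_nonneg hαl.le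
  -- compactness of Xal
  have hXal_closed : IsClosed (Xal f g h x0 αl) := by
    have hcont : Continuous fun z : EuclideanSpace ℝ (Fin n) => (Metric.infDist z X) ^ 2 :=
      (Metric.continuous_infDist_pt X).pow 2
    exact isClosed_le hcont continuous_const
  obtain ⟨R, hR⟩ := hcomp.isBounded.subset_closedBall 0
  have hXal_sub : Xal f g h x0 αl ⊆ Metric.closedBall 0 (R + Real.sqrt (gbar / αl)) := by
    intro z hz
    have hz' : (Metric.infDist z X) ^ 2 ≤ gbar / αl := hz
    have hsq : Metric.infDist z X ≤ Real.sqrt (gbar / αl) := by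
      rw [show Metric.infDist z X = Real.sqrt ((Metric.infDist z X) ^ 2) by
        rw [Real.sqrt_sq Metric.infDist_nonneg]]
      exact Real.sqrt_le_sqrt hz'
    obtain ⟨p, hpX, hpd⟩ := hcomp.exists_infDist_eq_dist ⟨xw, hxw⟩ z
    have hp0 : dist p 0 ≤ R := hR hpX
    have : dist z 0 ≤ dist z p + dist p 0 := dist_triangle z p 0
    rw [Metric.mem_closedBall]
    rw [← hpd] at this
    linarith
  have hXal_comp : IsCompact (Xal f g h x0 αl) :=
    (isCompact_closedBall 0 _).of_isClosed_subset hXal_closed hXal_sub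
  -- boundedness of Yset
  set R' : ℝ := R + Real.sqrt (gbar / αl) with hR'
  have hR'nn : 0 ≤ R' := by
    have : dist xw 0 ≤ R := hR hxw
    have := dist_nonneg.trans this
    have := Real.sqrt_nonneg (gbar / αl)
    simp only [hR']; linarith
  obtain ⟨vm, hvmB, hvmax⟩ := (isCompact_closedBall (0 : EuclideanSpace ℝ (Fin n)) (R' + 1)).exists_isMaxOn
    ⟨0, by simp; linarith⟩ hgcont.continuousOn
  set M : ℝ := g vm with hM
  have hMnn : 0 ≤ M := hb.g_nonneg vm
  have hYsub : Yset f g h x0 αl ⊆ Metric.closedBall 0 M := by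
    intro y hy
    rw [Yset, Set.mem_iUnion₂] at hy
    obtain ⟨z, hzXal, hyz⟩ := hy
    rcases eq_or_ne y 0 with rfl | hy0
    · simp [hMnn]
    · have hny : 0 < ‖y‖ := norm_pos_iff.mpr hy0
      set w : EuclideanSpace ℝ (Fin n) := z + ‖y‖⁻¹ • y with hw
      have hwB : w ∈ Metric.closedBall 0 (R' + 1) := by
        have hzB : ‖z‖ ≤ R' := by
          have := hXal_sub hzXal
          simpa [Metric.mem_closedBall, dist_eq_norm] using this
        have : ‖w‖ ≤ ‖z‖ + ‖‖y‖⁻¹ • y‖ := norm_add_le _ _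
        rw [norm_smul, norm_inv, norm_norm, inv_mul_cancel₀ hny.ne'] at this
        simp only [Metric.mem_closedBall, dist_eq_norm, sub_zero]
        linarith
      have hsub := hyz w
      have hinn : ⟪y, w - z⟫ = ‖y‖ := by
        rw [hw, add_sub_cancel_left, real_inner_smul_right, real_inner_self_eq_norm_sq]
        field_simp
      rw [hinn] at hsub
      have hgz : 0 ≤ g z := hb.g_nonneg z
      have hgw : g w ≤ M := hvmax hwB
      simp only [Metric.mem_closedBall, dist_eq_norm, sub_zero]
      linarith
  -- closedness of Yset
  have hYclosed : IsClosed (Yset f g h x0 αl) := by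
    apply IsSeqClosed.isClosed
    intro yk y hyk hylim
    have hzk : ∀ k, ∃ z, z ∈ Xal f g h x0 αl ∧ yk k ∈ cvxSubdiff g z := by
      intro k
      have := hyk k
      rw [Yset, Set.mem_iUnion₂] at this
      obtain ⟨z, hz1, hz2⟩ := this
      exact ⟨z, hz1, hz2⟩
    choose zk hzk1 hzk2 using hzk
    obtain ⟨z, hzXal, σ, hσmono, hσlim⟩ := hXal_comp.tendsto_subseq hzk1
    rw [Yset, Set.mem_iUnion₂]
    refine ⟨z, hzXal, fun v => ?_⟩
    have hcont2 : Continuous fun pq : EuclideanSpace ℝ (Fin n) × EuclideanSpace ℝ (Fin n) =>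
        g pq.1 + ⟪pq.2, v - pq.1⟫ := by
      apply (hgcont.comp continuous_fst).add
      exact continuous_snd.inner (continuous_const.sub continuous_fst)
    have hylim2 : Tendsto (fun k => yk (σ k)) atTop (𝓝 y) :=
      hylim.comp hσmono.tendsto_atTop
    have hpair : Tendsto (fun k => (zk (σ k), yk (σ k))) atTop (𝓝 (z, y)) := by
      rw [nhds_prod_eq]
      exact hσlim.prodMk hylim2
    have htt : Tendsto (fun k => g (zk (σ k)) + ⟪yk (σ k), v - zk (σ k)⟫) atTop
        (𝓝 (g z + ⟪y, v - z⟫)) := (hcont2.tendsto _).comp hpair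
    exact le_of_tendsto htt (Eventually.of_forall fun k => hzk2 (σ k) v)
  have hYcomp : IsCompact (Yset f g h x0 αl) :=
    (isCompact_closedBall 0 M).of_isClosed_subset hYclosed hYsub
  refine ⟨hYcomp, ?_⟩
  -- part 2
  intro x hx y hQ α hαα yp hyp
  have hαpos : 0 < α := lt_of_lt_of_le hαl hαα
  have hcond : f x ≠ ⊤ ∧ 0 < eta g x y := by
    by_contra hcon
    rw [Qfun, if_neg hcon] at hQ
    exact hQ rfl
  obtain ⟨hfx, heta⟩ := hcond
  -- fconj g y is a finite real < ⟪x,y⟫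
  have hfy_ne_top : fconj g y ≠ ⊤ := by
    intro ht
    rw [eta, ht] at heta
    have : ((⟪x, y⟫ : ℝ) : EReal) - ⊤ = ⊥ := by
      simp
    rw [this] at heta
    exact absurd heta (by simp)
  obtain ⟨Gy, hGy⟩ : ∃ Gy : ℝ, fconj g y = (Gy : EReal) :=
    ⟨(fconj g y).toReal, (EReal.coe_toReal hfy_ne_top (fconj_ne_bot g y)).symm⟩
  have hGylt : Gy < ⟪x, y⟫ := by
    rw [eta, hGy, ← EReal.coe_sub] at heta
    have : (0 : ℝ) < ⟪x, y⟫ - Gy := by exact_mod_cast heta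
    linarith
  set u : EuclideanSpace ℝ (Fin n) := y + α • x with hu
  -- fconj g yp is a finite real
  have hfyp_ne_top : fconj g yp ≠ ⊤ := by
    intro ht
    have hp := hyp y
    rw [scaleE, ht, scaleE, hGy] at hp
    rw [EReal.coe_mul_top_of_pos hαpos, EReal.top_add_coe, ← EReal.coe_mul, ← EReal.coe_add,
      top_le_iff] at hp
    exact absurd hp (EReal.coe_ne_top _)
  obtain ⟨Gyp, hGyp⟩ : ∃ Gyp : ℝ, fconj g yp = (Gyp : EReal) :=
    ⟨(fconj g yp).toReal, (EReal.coe_toReal hfyp_ne_top (fconj_ne_bot g yp)).symm⟩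
  have hFY : ⟪x, yp⟫ - g x ≤ Gyp := by
    have := fconj_ge g yp x; rw [hGyp] at this; exact_mod_cast this
  set d : EuclideanSpace ℝ (Fin n) := y - yp with hd
  -- step B : ‖d‖² ≤ α g x
  have hkey1 : α * (Gyp - Gy) ≤ ⟪yp - u, y - yp⟫ :=
    prox_key g α hαpos u yp hyp Gyp hGyp y Gy (le_of_eq hGy)
  have hyu : yp - u = -(y - yp) - α • x := by rw [hu]; abel
  have hinn1 : ⟪yp - u, y - yp⟫ = -‖d‖ ^ 2 - α * ⟪x, y - yp⟫ := by
    rw [hd, hyu, inner_sub_left, inner_neg_left, real_inner_smul_left,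
      real_inner_self_eq_norm_sq]
    try ring
  have hinn2 : ⟪x, y - yp⟫ = ⟪x, y⟫ - ⟪x, yp⟫ := inner_sub_right x y yp
  have hb2 : ‖d‖ ^ 2 ≤ α * g x := by
    rw [hinn1, hinn2] at hkey1
    have h1 : ⟪x, yp⟫ - g x - ⟪x, y⟫ ≤ Gyp - Gy := by linarith
    have h2 := mul_le_mul_of_nonneg_left h1 hαpos.le
    nlinarith [h2, hkey1]
  -- step C : yp ∈ ∂g(z)
  set z : EuclideanSpace ℝ (Fin n) := x + α⁻¹ • d with hz
  obtain ⟨w0, hw0⟩ := exists_subgrad g hgconv z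
  set r0 : ℝ := ⟪z, w0⟫ - g z with hr0
  have hw0conj : fconj g w0 ≤ (r0 : EReal) := by
    apply fconj_le_real
    intro x'
    have := hw0 x'
    have hinn3 : ⟪w0, x' - z⟫ = ⟪x', w0⟫ - ⟪z, w0⟫ := by
      rw [real_inner_comm, inner_sub_left]
    rw [hinn3] at this
    simp only [hr0]
    linarith
  have hkey2 : α * (Gyp - r0) ≤ ⟪yp - u, w0 - yp⟫ :=
    prox_key g α hαpos u yp hyp Gyp hGyp w0 r0 hw0conj
  have hαz : α • z = α • x + d := by
    rw [hz, smul_add, smul_smul, mul_inv_cancel₀ hαpos.ne', one_smul]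
  have hyu2 : yp - u = -(α • z) := by
    rw [hαz, hu, hd]; abel
  have hinn4 : ⟪yp - u, w0 - yp⟫ = -(α * (⟪z, w0⟫ - ⟪z, yp⟫)) := by
    rw [hyu2, inner_neg_left, real_inner_smul_left, inner_sub_right]
  have hGyp_le : Gyp ≤ ⟪z, yp⟫ - g z := by
    rw [hinn4] at hkey2
    have := (mul_le_mul_iff_right₀ hαpos).mp (by linarith [hkey2] :
      α * (Gyp - r0) ≤ α * (-(⟪z, w0⟫ - ⟪z, yp⟫)))
    simp only [hr0] at this ⊢
    linarith
  have hmem : yp ∈ cvxSubdiff g z := by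
    intro v
    have h5 : ⟪v, yp⟫ - g v ≤ Gyp := by
      have := fconj_ge g yp v; rw [hGyp] at this; exact_mod_cast this
    have hinn5 : ⟪yp, v - z⟫ = ⟪v, yp⟫ - ⟪z, yp⟫ := by
      rw [real_inner_comm, inner_sub_left]
    rw [hinn5]
    linarith
  -- z ∈ Xal
  have hzx : z - x = α⁻¹ • d := by rw [hz]; abel
  have hzXal : z ∈ Xal f g h x0 αl := by
    show (Metric.infDist z X) ^ 2 ≤ sSup (g '' X) / αl
    have h6 : Metric.infDist z X ≤ dist z x := Metric.infDist_le_dist_of_mem hx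
    have h7 : dist z x = α⁻¹ * ‖d‖ := by
      rw [dist_eq_norm, hzx, norm_smul, norm_inv, Real.norm_eq_abs, abs_of_pos hαpos]
    have h8 : (Metric.infDist z X) ^ 2 ≤ (α⁻¹ * ‖d‖) ^ 2 := by
      rw [← h7]
      exact pow_le_pow_left₀ Metric.infDist_nonneg h6 2
    have h9 : (α⁻¹ * ‖d‖) ^ 2 ≤ g x / α := by
      have h10 : (α⁻¹) ^ 2 * ‖d‖ ^ 2 ≤ (α⁻¹) ^ 2 * (α * g x) :=
        mul_le_mul_of_nonneg_left hb2 (by positivity)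
      have h11 : (α⁻¹) ^ 2 * (α * g x) = g x / α := by
        field_simp
      rw [mul_pow]
      linarith
    have hgxle : g x ≤ gbar := le_csSup hbdd ⟨x, hx, rfl⟩
    have h12 : g x / α ≤ gbar / αl :=
      div_le_div₀ hgbar_nonneg hgxle hαl hαα
    calc (Metric.infDist z X) ^ 2 ≤ g x / α := h8.trans h9
      _ ≤ gbar / αl := h12
  rw [Yset, Set.mem_iUnion₂]
  exact ⟨z, hzXal, hmem⟩
end Paper
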